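/- arXiv:1802.05177 — 2 statements merged into one kernel-verified Lean document; each statement's English description precedes it below -/
import Mathlib

section
/- Let α, β > -1 be real and let L > 0. For all m, n ∈ ℕ with m ≠ n, the rational Jacobi functions are orthogonal with respect to the weight w_L^{α,β}: ∫₀^∞ J_n^{α,β}((x-L)/(x+L)) · J_m^{α,β}((x-L)/(x+L)) · 2^(α+β+1) x^β L^(α+1)/(x+L)^(α+β+2) dx = 0. -/
open MeasureTheory Set Polynomial Finset

/-- The Jacobi polynomial `J_n^{α,β}` for real parameters `α, β`, defined by
`J_n^{α,β}(x) = (Γ(n+α+1)/(n!·Γ(n+α+β+1))) ·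
  ∑_{i=0}^{n} C(n,i) · (Γ(n+i+α+β+1)/Γ(i+α+1)) · ((x-1)/2)^i`,
where `Γ` is the real Gamma function and `C(n,i)` the binomial coefficient. -/
noncomputable def jacobiP (n : ℕ) (α β x : ℝ) : ℝ :=
  (Real.Gamma (n + α + 1) / (n.factorial * Real.Gamma (n + α + β + 1))) *
    ∑ i ∈ Finset.range (n + 1),
      (n.choose i : ℝ) * (Real.Gamma (n + i + α + β + 1) / Real.Gamma (i + α + 1)) *
        ((x - 1) / 2) ^ i

lemma alt_sum_choose_poly : ∀ (n : ℕ) (p : Polynomial ℝ), p.degree < n →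
    ∑ i ∈ range (n + 1), (-1 : ℝ) ^ i * (n.choose i : ℝ) * p.eval (i : ℝ) = 0 := by
  intro n
  induction n with
  | zero =>
    intro p hp
    have : p = 0 := by
      rw [← Polynomial.degree_eq_bot]
      exact Nat.WithBot.lt_zero_iff.mp (by exact_mod_cast hp)
    simp [this]
  | succ n ih =>
    intro p hp
    set q : Polynomial ℝ := p.comp (X + C 1) - p with hq
    have hpn : p.degree ≤ (n : WithBot ℕ) := by
      by_cases hp0 : p = 0
      · simp [hp0]
      · rw [Polynomial.degree_eq_natDegree hp0] at hp ⊢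
        exact_mod_cast Nat.lt_succ_iff.mp (by exact_mod_cast hp)
    have hqdeg : q.degree < n := by
      rcases le_or_gt p.degree 0 with h0 | h0
      · have hpc : p.comp (X + C 1) = p := by
          conv_lhs => rw [Polynomial.eq_C_of_degree_le_zero h0]
          conv_rhs => rw [Polynomial.eq_C_of_degree_le_zero h0]
          simp
        rw [hq, hpc, sub_self]
        exact (by simp : (0:Polynomial ℝ).degree = ⊥) ▸ WithBot.bot_lt_coe _
      · have hp0 : p ≠ 0 := by
          intro h; rw [h] at h0; simp at h0
        have hlc : (p.comp (X + C 1)).leadingCoeff = p.leadingCoeff := by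
          rw [Polynomial.leadingCoeff_comp (by rw [Polynomial.natDegree_X_add_C]; exact one_ne_zero),
            Polynomial.leadingCoeff_X_add_C, one_pow, mul_one]
        have hcomp0 : p.comp (X + C 1) ≠ 0 := by
          intro h; apply hp0
          rw [← Polynomial.leadingCoeff_eq_zero, ← hlc, h, Polynomial.leadingCoeff_zero]
        have hndc : (p.comp (X + C 1)).natDegree = p.natDegree := by
          rw [Polynomial.natDegree_comp, Polynomial.natDegree_X_add_C, mul_one]
        have hdc : (p.comp (X + C 1)).degree = p.degree := by
          rw [Polynomial.degree_eq_natDegree hcomp0, Polynomial.degree_eq_natDegree hp0, hndc]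
        have h1 := Polynomial.degree_sub_lt hdc hcomp0 hlc
        rw [hdc] at h1
        exact lt_of_lt_of_le h1 hpn
    have hqe : ∀ x : ℝ, q.eval x = p.eval (x + 1) - p.eval x := by
      intro x; simp [hq]
    have IH := ih q hqdeg
    have key : ∑ i ∈ range (n + 1), (-1:ℝ)^i * (n.choose i : ℝ) * p.eval ((i:ℝ)+1)
        = ∑ i ∈ range (n + 1), (-1:ℝ)^i * (n.choose i : ℝ) * p.eval (i:ℝ) := by
      have h0 : ∑ i ∈ range (n + 1), (-1:ℝ)^i * (n.choose i : ℝ) *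
          (p.eval ((i:ℝ)+1) - p.eval (i:ℝ)) = 0 := by
        rw [← IH]; apply Finset.sum_congr rfl; intro i _; rw [hqe]
      have h2 : (∑ i ∈ range (n+1), (-1:ℝ)^i * (n.choose i : ℝ) * p.eval ((i:ℝ)+1))
          - ∑ i ∈ range (n+1), (-1:ℝ)^i * (n.choose i : ℝ) * p.eval (i:ℝ) = 0 := by
        rw [← Finset.sum_sub_distrib, ← h0]
        apply Finset.sum_congr rfl; intro i _; ring
      linarith
    set T2 := ∑ i ∈ range (n + 1), (-1:ℝ)^i * (n.choose i : ℝ) * p.eval (i:ℝ) with hT2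
    have hU : ∑ i ∈ range (n + 1), (-1:ℝ)^i * (n.choose (i+1) : ℝ) * p.eval ((i:ℝ)+1)
        = p.eval 0 - T2 := by
      have hT2' : T2 = (∑ i ∈ range n, (-1:ℝ)^(i+1) * (n.choose (i+1) : ℝ) *
          p.eval ((i:ℝ)+1)) + p.eval 0 := by
        rw [hT2, Finset.sum_range_succ']
        push_cast [Nat.choose_zero_right]
        norm_num
      rw [Finset.sum_range_succ]
      simp only [Nat.choose_succ_self, Nat.cast_zero, mul_zero, zero_mul, add_zero]
      rw [hT2']
      have h3 : ∑ i ∈ range n, (-1:ℝ)^(i+1) * (n.choose (i+1) : ℝ) * p.eval ((i:ℝ)+1)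
          = -∑ i ∈ range n, (-1:ℝ)^i * (n.choose (i+1) : ℝ) * p.eval ((i:ℝ)+1) := by
        rw [← Finset.sum_neg_distrib]; apply Finset.sum_congr rfl; intro i _; ring
      rw [h3]; ring
    rw [Finset.sum_range_succ']
    have hF : ∀ i ∈ range (n+1), (-1:ℝ)^(i+1) * ((n+1).choose (i+1) : ℝ) *
        p.eval ((i+1 : ℕ) : ℝ)
        = -((-1:ℝ)^i * (n.choose i : ℝ) * p.eval ((i:ℝ)+1))
          + -((-1:ℝ)^i * (n.choose (i+1) : ℝ) * p.eval ((i:ℝ)+1)) := by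
      intro i _
      rw [Nat.choose_succ_succ]
      push_cast
      ring
    rw [Finset.sum_congr rfl hF, Finset.sum_add_distrib, Finset.sum_neg_distrib,
      Finset.sum_neg_distrib, key, hU]
    push_cast [Nat.choose_zero_right]
    ring

open MeasureTheory Set

lemma betaReal_integrable {a b : ℝ} (ha : -1 < a) (hb : -1 < b) :
    IntegrableOn (fun u : ℝ => u ^ a * (1 - u) ^ b) (Ioo (0:ℝ) 1) := by
  have hu : 0 < ((a+1 : ℝ) : ℂ).re := by simpa using by linarith
  have hv : 0 < ((b+1 : ℝ) : ℂ).re := by simpa using by linarith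
  have hF := (Complex.betaIntegral_convergent hu hv)
  have hF' : IntegrableOn
      (fun x : ℝ => (x:ℂ) ^ (((a+1:ℝ):ℂ) - 1) * ((1:ℂ) - x) ^ (((b+1:ℝ):ℂ) - 1))
      (Ioo (0:ℝ) 1) := by
    have := (intervalIntegrable_iff_integrableOn_Ioc_of_le (by norm_num : (0:ℝ) ≤ 1)).mp hF
    exact this.mono_set Ioo_subset_Ioc_self
  have hre : IntegrableOn
      (fun x : ℝ => ((x:ℂ) ^ (((a+1:ℝ):ℂ) - 1) * ((1:ℂ) - x) ^ (((b+1:ℝ):ℂ) - 1)).re)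
      (Ioo (0:ℝ) 1) := hF'.re
  apply IntegrableOn.congr_fun hre ?_ measurableSet_Ioo
  intro x hx
  have ea : ((a+1:ℝ):ℂ) - 1 = (a:ℂ) := by push_cast; ring
  have eb : ((b+1:ℝ):ℂ) - 1 = (b:ℂ) := by push_cast; ring
  have h1 : (x:ℂ) ^ (a:ℂ) = ((x ^ a : ℝ) : ℂ) := (Complex.ofReal_cpow hx.1.le a).symm
  have h2 : ((1:ℂ) - x) ^ (b:ℂ) = (((1-x) ^ b : ℝ) : ℂ) := by
    rw [show ((1:ℂ) - x) = ((1-x : ℝ):ℂ) by push_cast; ring,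
      ← Complex.ofReal_cpow (by linarith [hx.2] : (0:ℝ) ≤ 1 - x)]
  simp only [ea, eb, h1, h2, ← Complex.ofReal_mul, Complex.ofReal_re]

lemma betaReal_eval {a b : ℝ} (ha : -1 < a) (hb : -1 < b) :
    ∫ u in Ioo (0:ℝ) 1, u ^ a * (1 - u) ^ b =
      Real.Gamma (a+1) * Real.Gamma (b+1) / Real.Gamma (a+b+2) := by
  have hu : 0 < ((a+1 : ℝ) : ℂ).re := by simpa using by linarith
  have hv : 0 < ((b+1 : ℝ) : ℂ).re := by simpa using by linarith
  have h1 := Complex.Gamma_mul_Gamma_eq_betaIntegral hu hv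
  have hbeta : Complex.betaIntegral ((a+1:ℝ):ℂ) ((b+1:ℝ):ℂ)
      = ((∫ u in Ioo (0:ℝ) 1, u ^ a * (1 - u) ^ b : ℝ) : ℂ) := by
    rw [Complex.betaIntegral, intervalIntegral.integral_of_le (by norm_num : (0:ℝ) ≤ 1),
      integral_Ioc_eq_integral_Ioo]
    rw [show ((∫ u in Ioo (0:ℝ) 1, u ^ a * (1 - u) ^ b : ℝ) : ℂ)
        = ∫ u in Ioo (0:ℝ) 1, ((u ^ a * (1 - u) ^ b : ℝ) : ℂ) from (integral_ofReal).symm]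
    apply setIntegral_congr_fun measurableSet_Ioo
    intro x hx
    have ea : ((a+1:ℝ):ℂ) - 1 = (a:ℂ) := by push_cast; ring
    have eb : ((b+1:ℝ):ℂ) - 1 = (b:ℂ) := by push_cast; ring
    have h1' : (x:ℂ) ^ (a:ℂ) = ((x ^ a : ℝ) : ℂ) := (Complex.ofReal_cpow hx.1.le a).symm
    have h2' : ((1:ℂ) - x) ^ (b:ℂ) = (((1-x) ^ b : ℝ) : ℂ) := by
      rw [show ((1:ℂ) - x) = ((1-x : ℝ):ℂ) by push_cast; ring,
        ← Complex.ofReal_cpow (by linarith [hx.2] : (0:ℝ) ≤ 1 - x)]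
    simp only [ea, eb, h1', h2', ← Complex.ofReal_mul]
  have hsum : ((a+1:ℝ):ℂ) + ((b+1:ℝ):ℂ) = ((a+b+2:ℝ):ℂ) := by push_cast; ring
  rw [hsum, hbeta, Complex.Gamma_ofReal, Complex.Gamma_ofReal, Complex.Gamma_ofReal,
    ← Complex.ofReal_mul, ← Complex.ofReal_mul] at h1
  have h2 := Complex.ofReal_inj.mp h1
  have hne : Real.Gamma (a+b+2) ≠ 0 := (Real.Gamma_pos_of_pos (by linarith)).ne'
  field_simp
  linarith [h2]

open MeasureTheory Set Finset

lemma Gamma_add_nat' {x : ℝ} (hx : 0 < x) (d : ℕ) :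
    Real.Gamma (x + d) = (∏ j ∈ range d, (x + j)) * Real.Gamma x := by
  induction d with
  | zero => simp
  | succ d ih =>
    have h1 : x + (d + 1 : ℕ) = (x + d) + 1 := by push_cast; ring
    rw [h1, Real.Gamma_add_one (by positivity), ih, Finset.prod_range_succ]
    ring

lemma term_eq {α β : ℝ} (hα : -1 < α) (hβ : -1 < β) (i k : ℕ) :
    ∀ u ∈ Ioo (0:ℝ) 1, (u - 1) ^ i * u ^ k * (u ^ β * (1 - u) ^ α)
      = (-1 : ℝ) ^ i * (u ^ (β + k) * (1 - u) ^ (α + i)) := by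
  intro u hu
  have hu0 : (0:ℝ) < u := hu.1
  have hu1 : (0:ℝ) < 1 - u := by linarith [hu.2]
  have h1 : (u - 1) ^ i = (-1:ℝ) ^ i * (1 - u) ^ i := by
    rw [show u - 1 = -(1 - u) by ring, neg_pow]
  have h2 : u ^ (β + k) = u ^ β * u ^ k := by
    rw [Real.rpow_add hu0, Real.rpow_natCast]
  have h3 : (1 - u) ^ (α + i) = (1 - u) ^ α * (1 - u) ^ i := by
    rw [Real.rpow_add hu1, Real.rpow_natCast]
  rw [h1, h2, h3]; ring

lemma term_integrable {α β : ℝ} (hα : -1 < α) (hβ : -1 < β) (i k : ℕ) :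
    IntegrableOn (fun u : ℝ => (u - 1) ^ i * u ^ k * (u ^ β * (1 - u) ^ α))
      (Ioo (0:ℝ) 1) := by
  have h := (betaReal_integrable
    (by linarith [Nat.cast_nonneg (α := ℝ) k] : (-1:ℝ) < β + k)
    (by linarith [Nat.cast_nonneg (α := ℝ) i] : (-1:ℝ) < α + i)).const_mul ((-1:ℝ) ^ i)
  exact IntegrableOn.congr_fun h (fun u hu => (term_eq hα hβ i k u hu).symm) measurableSet_Ioo

lemma term_value {α β : ℝ} (hα : -1 < α) (hβ : -1 < β) (i k : ℕ) :
    ∫ u in Ioo (0:ℝ) 1, (u - 1) ^ i * u ^ k * (u ^ β * (1 - u) ^ α)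
      = (-1 : ℝ) ^ i * (Real.Gamma (β + k + 1) * Real.Gamma (α + i + 1) /
          Real.Gamma (β + k + (α + i) + 2)) := by
  rw [setIntegral_congr_fun measurableSet_Ioo (term_eq hα hβ i k)]
  rw [integral_const_mul]
  congr 1
  exact betaReal_eval (by push_cast; linarith [Nat.cast_nonneg (α := ℝ) k] : (-1:ℝ) < β + k)
    (by push_cast; linarith [Nat.cast_nonneg (α := ℝ) i])

lemma jacobi_expand (n k : ℕ) (α β u : ℝ) :
    jacobiP n α β (2*u - 1) * u ^ k * (u ^ β * (1 - u) ^ α)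
      = ∑ i ∈ range (n + 1),
          (Real.Gamma (n + α + 1) / (n.factorial * Real.Gamma (n + α + β + 1)) *
            ((n.choose i : ℝ) * (Real.Gamma (n + i + α + β + 1) / Real.Gamma (i + α + 1)))) *
          ((u - 1) ^ i * u ^ k * (u ^ β * (1 - u) ^ α)) := by
  rw [jacobiP, show ((2*u - 1) - 1)/2 = u - 1 from by ring, Finset.mul_sum,
    Finset.sum_mul, Finset.sum_mul]
  exact Finset.sum_congr rfl fun i _ => by ring

lemma jacobi_term_integrable {α β : ℝ} (hα : -1 < α) (hβ : -1 < β) (n k : ℕ) :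
    IntegrableOn (fun u : ℝ => jacobiP n α β (2*u - 1) * u ^ k * (u ^ β * (1 - u) ^ α))
      (Ioo (0:ℝ) 1) := by
  have h : IntegrableOn (fun u : ℝ => ∑ i ∈ range (n + 1),
      (Real.Gamma (n + α + 1) / (n.factorial * Real.Gamma (n + α + β + 1)) *
        ((n.choose i : ℝ) * (Real.Gamma (n + i + α + β + 1) / Real.Gamma (i + α + 1)))) *
      ((u - 1) ^ i * u ^ k * (u ^ β * (1 - u) ^ α))) (Ioo (0:ℝ) 1) :=
    integrable_finset_sum _ fun i _ => (term_integrable hα hβ i k).const_mul _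
  exact IntegrableOn.congr_fun h (fun u _ => (jacobi_expand n k α β u).symm) measurableSet_Ioo

lemma cancel_helper (A c P G1 G2 B s : ℝ) (h1 : G1 ≠ 0) (h2 : G2 ≠ 0) :
    A * (c * (P * G2 / G1)) * (s * (B * G1 / G2)) = A * B * (s * c * P) := by
  field_simp

lemma jacobi_moment {α β : ℝ} (hα : -1 < α) (hβ : -1 < β) {n k : ℕ} (hk : k < n) :
    ∫ u in Ioo (0:ℝ) 1, jacobiP n α β (2*u - 1) * u ^ k * (u ^ β * (1 - u) ^ α) = 0 := by
  set d : ℕ := n - (k + 1) with hdd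
  have hkn : k + 1 ≤ n := hk
  have hdr : (d : ℝ) = (n : ℝ) - k - 1 := by
    rw [hdd, Nat.cast_sub hkn]
    push_cast
    ring
  set p : Polynomial ℝ := ∏ j ∈ range d, (Polynomial.X + Polynomial.C (α + β + k + 2 + j))
    with hpp
  have hpdeg : p.degree < (n : WithBot ℕ) := by
    have : p.degree = d := by
      rw [hpp, Polynomial.degree_prod]
      simp only [Polynomial.degree_X_add_C]
      rw [Finset.sum_const, card_range, nsmul_eq_mul, mul_one]
    rw [this]
    have hdn : d < n := by omega
    exact_mod_cast hdn
  have hpeval : ∀ i : ℕ, p.eval (i : ℝ) = ∏ j ∈ range d, ((i : ℝ) + (α + β + k + 2 + j)) := by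
    intro i
    simp [hpp, Polynomial.eval_prod]
  rw [setIntegral_congr_fun measurableSet_Ioo (fun u _ => jacobi_expand n k α β u)]
  rw [integral_finset_sum _ (fun i _ => ((term_integrable hα hβ i k).const_mul _))]
  have hstep : ∀ i ∈ range (n + 1),
      (∫ u in Ioo (0:ℝ) 1,
        (Real.Gamma (n + α + 1) / (n.factorial * Real.Gamma (n + α + β + 1)) *
          ((n.choose i : ℝ) * (Real.Gamma (n + i + α + β + 1) / Real.Gamma (i + α + 1)))) *
        ((u - 1) ^ i * u ^ k * (u ^ β * (1 - u) ^ α)))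
      = (Real.Gamma (n + α + 1) / (n.factorial * Real.Gamma (n + α + β + 1)) *
          Real.Gamma (β + k + 1)) *
        ((-1 : ℝ) ^ i * (n.choose i : ℝ) * p.eval (i : ℝ)) := by
    intro i _
    rw [integral_const_mul, term_value hα hβ i k]
    have hx : (0:ℝ) < β + k + (α + i) + 2 := by
      have : (0:ℝ) ≤ (k:ℝ) := Nat.cast_nonneg k
      have : (0:ℝ) ≤ (i:ℝ) := Nat.cast_nonneg i
      linarith [Nat.cast_nonneg (α := ℝ) k]
    have hgam : Real.Gamma ((n:ℝ) + i + α + β + 1)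
        = (∏ j ∈ range d, (β + k + (α + i) + 2 + j)) * Real.Gamma (β + k + (α + i) + 2) := by
      rw [show (n:ℝ) + i + α + β + 1 = (β + k + (α + i) + 2) + d by rw [hdr]; ring]
      exact Gamma_add_nat' hx d
    have hgne : Real.Gamma (β + k + (α + i) + 2) ≠ 0 := (Real.Gamma_pos_of_pos hx).ne'
    have hane : Real.Gamma ((i:ℝ) + α + 1) ≠ 0 :=
      (Real.Gamma_pos_of_pos (by linarith [Nat.cast_nonneg (α := ℝ) i])).ne'
    have haa : Real.Gamma (α + (i:ℝ) + 1) = Real.Gamma ((i:ℝ) + α + 1) := by ring_nf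
    have hprod : p.eval (i : ℝ) = ∏ j ∈ range d, (β + k + (α + i) + 2 + j) := by
      rw [hpeval i]
      exact Finset.prod_congr rfl fun j _ => by ring
    rw [hgam, haa, hprod]
    exact cancel_helper _ _ _ _ _ _ _ hane hgne
  rw [Finset.sum_congr rfl hstep, ← Finset.mul_sum]
  have := alt_sum_choose_poly n p hpdeg
  rw [show (∑ i ∈ range (n+1), (-1:ℝ)^i * (n.choose i : ℝ) * p.eval (i:ℝ)) = 0 from this]
  ring

lemma jacobi_orth_Ioo {α β : ℝ} (hα : -1 < α) (hβ : -1 < β) {m n : ℕ} (hmn : m < n) :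
    ∫ u in Ioo (0:ℝ) 1,
      jacobiP n α β (2*u - 1) * jacobiP m α β (2*u - 1) * (u ^ β * (1 - u) ^ α) = 0 := by
  set q : Polynomial ℝ :=
    Polynomial.C (Real.Gamma (m + α + 1) / (m.factorial * Real.Gamma (m + α + β + 1))) *
      ∑ i ∈ range (m + 1),
        Polynomial.C ((m.choose i : ℝ) * (Real.Gamma (m + i + α + β + 1) / Real.Gamma (i + α + 1)))
          * (Polynomial.X - Polynomial.C 1) ^ i with hq
  have hqe : ∀ u : ℝ, q.eval u = jacobiP m α β (2*u - 1) := by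
    intro u
    rw [jacobiP, show ((2*u - 1) - 1)/2 = u - 1 from by ring, hq]
    simp [Polynomial.eval_finset_sum]
  have hqdeg : q.degree ≤ (m : WithBot ℕ) := by
    rw [hq]
    refine le_trans (Polynomial.degree_mul_le _ _) ?_
    have hs : (∑ i ∈ range (m+1),
        Polynomial.C ((m.choose i : ℝ) * (Real.Gamma (m + i + α + β + 1) / Real.Gamma (i + α + 1)))
          * (Polynomial.X - Polynomial.C 1) ^ i).degree ≤ (m : WithBot ℕ) := by
      refine le_trans (Polynomial.degree_sum_le _ _) ?_
      apply Finset.sup_le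
      intro i hi
      refine le_trans (Polynomial.degree_mul_le _ _) ?_
      have h2 : ((Polynomial.X - Polynomial.C (1:ℝ)) ^ i).degree ≤ (i : WithBot ℕ) := by
        refine le_trans (Polynomial.degree_pow_le _ _) ?_
        rw [Polynomial.degree_X_sub_C, nsmul_eq_mul, mul_one]
      have h3 : (i : WithBot ℕ) ≤ (m : WithBot ℕ) := by
        exact_mod_cast Nat.lt_succ_iff.mp (mem_range.mp hi)
      calc (Polynomial.C ((m.choose i : ℝ) *
              (Real.Gamma (m + i + α + β + 1) / Real.Gamma (i + α + 1)))).degree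
            + ((Polynomial.X - Polynomial.C (1:ℝ)) ^ i).degree
          ≤ 0 + (i : WithBot ℕ) := add_le_add Polynomial.degree_C_le h2
        _ = (i : WithBot ℕ) := zero_add _
        _ ≤ (m : WithBot ℕ) := h3
    calc (Polynomial.C (Real.Gamma (m + α + 1) /
            (m.factorial * Real.Gamma (m + α + β + 1)))).degree + _
        ≤ 0 + (m : WithBot ℕ) := add_le_add Polynomial.degree_C_le hs
      _ = (m : WithBot ℕ) := zero_add _
  have hdeg_nat : q.natDegree < m + 1 :=
    Nat.lt_succ_iff.mpr (Polynomial.natDegree_le_iff_degree_le.mpr hqdeg)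
  have hpt : ∀ u ∈ Ioo (0:ℝ) 1,
      jacobiP n α β (2*u - 1) * jacobiP m α β (2*u - 1) * (u ^ β * (1 - u) ^ α)
        = ∑ k ∈ range (m + 1),
            q.coeff k * (jacobiP n α β (2*u - 1) * u ^ k * (u ^ β * (1 - u) ^ α)) := by
    intro u _
    rw [← hqe u, Polynomial.eval_eq_sum_range' hdeg_nat, Finset.mul_sum, Finset.sum_mul]
    exact Finset.sum_congr rfl fun k _ => by ring
  rw [setIntegral_congr_fun measurableSet_Ioo hpt]
  rw [integral_finset_sum _ (fun k _ => (jacobi_term_integrable hα hβ n k).const_mul _)]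
  apply Finset.sum_eq_zero
  intro k hk
  rw [integral_const_mul, jacobi_moment hα hβ (lt_of_lt_of_le (mem_range.mp hk) hmn)]
  exact mul_zero _

/-- For real `α, β > -1`, `L > 0` and `m ≠ n`, the rational Jacobi
functions are orthogonal with respect to the weight
`w_L^{α,β}(x) = 2^(α+β+1) x^β L^(α+1)/(x+L)^(α+β+2)` on `(0,∞)`:
their weighted product integrates to zero. -/
theorem rationalJacobi_orthogonal (α β L : ℝ) (hα : -1 < α) (hβ : -1 < β) (hL : 0 < L)
    (m n : ℕ) (hmn : m ≠ n) :
    ∫ x in Ioi (0 : ℝ),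
        jacobiP n α β ((x - L) / (x + L)) * jacobiP m α β ((x - L) / (x + L)) *
          (2 ^ (α + β + 1) * x ^ β * L ^ (α + 1) / (x + L) ^ (α + β + 2)) = 0 := by
  set g : ℝ → ℝ := fun u => L * u / (1 - u) with hg
  have himg : g '' Ioo 0 1 = Ioi (0:ℝ) := by
    ext x
    constructor
    · rintro ⟨u, ⟨hu0, hu1⟩, rfl⟩
      exact div_pos (mul_pos hL hu0) (by linarith)
    · intro hx
      have hx0 : (0:ℝ) < x := hx
      have hxL : (0:ℝ) < x + L := by linarith
      refine ⟨x / (x + L), ⟨div_pos hx0 hxL, (div_lt_one hxL).mpr (by linarith)⟩, ?_⟩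
      rw [hg]
      have h1 : 1 - x / (x + L) = L / (x + L) := by field_simp; ring
      field_simp [h1]
      rw [show x + L - x = L by ring, div_self hL.ne']
  have hderiv : ∀ u ∈ Ioo (0:ℝ) 1, HasDerivWithinAt g (L / (1 - u)^2) (Ioo 0 1) u := by
    intro u hu
    have hs : (1:ℝ) - u ≠ 0 := sub_ne_zero_of_ne (by linarith [hu.2])
    have h1 : HasDerivAt (fun u : ℝ => L * u) L u := by
      simpa using (hasDerivAt_id u).const_mul L
    have h2 : HasDerivAt (fun u : ℝ => 1 - u) (-1) u := by
      simpa using (hasDerivAt_id u).const_sub 1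
    have h3 := h1.div h2 hs
    have h4 : (L * (1 - u) - L * u * (-1)) / (1 - u)^2 = L / (1 - u)^2 := by
      rw [show L * (1 - u) - L * u * (-1) = L by ring]
    rw [h4] at h3
    exact h3.hasDerivWithinAt
  have hinj : InjOn g (Ioo 0 1) := by
    intro a ha b hb h
    have ha1 : (1:ℝ) - a ≠ 0 := sub_ne_zero_of_ne (by linarith [ha.2])
    have hb1 : (1:ℝ) - b ≠ 0 := sub_ne_zero_of_ne (by linarith [hb.2])
    have h' : L * a / (1 - a) = L * b / (1 - b) := h
    rw [div_eq_div_iff ha1 hb1] at h'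
    have h : L * a * (1 - b) = L * b * (1 - a) := h'
    have h3 : a * (1 - b) = b * (1 - a) := by
      apply mul_left_cancel₀ hL.ne'
      linear_combination h
    linear_combination h3
  rw [← himg, integral_image_eq_integral_abs_deriv_smul measurableSet_Ioo hderiv hinj]
  have hpt2 : ∀ u ∈ Ioo (0:ℝ) 1,
      |L / (1 - u)^2| •
        (jacobiP n α β ((g u - L) / (g u + L)) * jacobiP m α β ((g u - L) / (g u + L)) *
          (2 ^ (α + β + 1) * (g u) ^ β * L ^ (α + 1) / (g u + L) ^ (α + β + 2)))
      = 2 ^ (α + β + 1) *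
          (jacobiP n α β (2*u - 1) * jacobiP m α β (2*u - 1) * (u ^ β * (1 - u) ^ α)) := by
    intro u hu
    obtain ⟨hu0, hu1⟩ := hu
    set s : ℝ := 1 - u with hsdef
    have hs : (0:ℝ) < s := by rw [hsdef]; linarith
    have hgu : g u = L * u / s := rfl
    have hs' : s ≠ 0 := hs.ne'
    have e1 : g u + L = L / s := by rw [hgu]; field_simp; ring
    have e3 : g u - L = L * (2*u - 1) / s := by rw [hgu]; field_simp; ring
    have e2 : (g u - L) / (g u + L) = 2*u - 1 := by
      rw [e3, e1]
      field_simp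
    have e4 : (g u) ^ β = L ^ β * u ^ β / s ^ β := by
      rw [hgu, Real.div_rpow (by positivity) hs.le, Real.mul_rpow hL.le hu0.le]
    have e5 : (g u + L) ^ (α + β + 2) = L ^ (α + β + 2) / s ^ (α + β + 2) := by
      rw [e1, Real.div_rpow hL.le hs.le]
    have hLp : L ^ (α + β + 2) = L ^ (α + 1) * L ^ β * L := by
      rw [show α + β + 2 = (α + 1) + β + 1 by ring, Real.rpow_add hL, Real.rpow_add hL,
        Real.rpow_one]
    have hsp : s ^ (α + β + 2) = s ^ α * s ^ β * (s * s) := by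
      rw [show α + β + 2 = α + β + 1 + 1 by ring, Real.rpow_add hs, Real.rpow_add hs,
        Real.rpow_add hs, Real.rpow_one]
      ring
    have habs : |L / (1 - u)^2| = L / (s * s) := by
      rw [abs_of_pos (by positivity), hsdef]
      ring_nf
    have hA := (Real.rpow_pos_of_pos hL β).ne'
    have hB := (Real.rpow_pos_of_pos hL (α+1)).ne'
    have hP := (Real.rpow_pos_of_pos hs α).ne'
    have hQ := (Real.rpow_pos_of_pos hs β).ne'
    have hW : (L / (s * s)) *
        (2 ^ (α + β + 1) * (L ^ β * u ^ β / s ^ β) * L ^ (α + 1) /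
          (L ^ (α + β + 2) / s ^ (α + β + 2)))
        = 2 ^ (α + β + 1) * (u ^ β * s ^ α) := by
      rw [hLp, hsp]
      field_simp
    rw [smul_eq_mul, e2, e4, e5, habs]
    linear_combination (jacobiP n α β (2*u - 1) * jacobiP m α β (2*u - 1)) * hW
  rw [setIntegral_congr_fun measurableSet_Ioo hpt2, integral_const_mul]
  rcases hmn.lt_or_gt with h | h
  · rw [jacobi_orth_Ioo hα hβ h, mul_zero]
  · have hcomm : (∫ u in Ioo (0:ℝ) 1, jacobiP n α β (2*u - 1) * jacobiP m α β (2*u - 1) *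
        (u ^ β * (1 - u) ^ α))
        = ∫ u in Ioo (0:ℝ) 1, jacobiP m α β (2*u - 1) * jacobiP n α β (2*u - 1) *
        (u ^ β * (1 - u) ^ α) := by
      apply setIntegral_congr_fun measurableSet_Ioo
      intro u _
      ring
    rw [hcomm, jacobi_orth_Ioo hα hβ h, mul_zero]
end

section
/- For every real t with |t| ≤ 1, the cubic Taylor approximation of the inverse hyperbolic sine satisfies |arsinh(t) - (t - t³/6)| ≤ (3/40)·|t|⁵. -/
lemma arsinh_aux_lb {x : ℝ} (hx0 : 0 ≤ x) (hx1 : x ≤ 1) :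
    1 - x ^ 2 / 2 ≤ (Real.sqrt (1 + x ^ 2))⁻¹ := by
  have hs : 0 < Real.sqrt (1 + x ^ 2) := Real.sqrt_pos.2 (by positivity)
  have hsq : (Real.sqrt (1 + x ^ 2)) ^ 2 = 1 + x ^ 2 := Real.sq_sqrt (by positivity)
  rw [← one_div, le_div_iff₀ hs]
  have ha : (0:ℝ) ≤ 1 - x ^ 2 / 2 := by nlinarith
  have hprod : 0 ≤ (1 - x ^ 2 / 2) * Real.sqrt (1 + x ^ 2) := mul_nonneg ha hs.le
  have hsq2 : ((1 - x ^ 2 / 2) * Real.sqrt (1 + x ^ 2)) ^ 2 ≤ 1 := by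
    have h := mul_pow (1 - x ^ 2 / 2) (Real.sqrt (1 + x ^ 2)) 2
    rw [h, hsq]
    nlinarith [mul_nonneg (pow_nonneg hx0 4) (by nlinarith : (0:ℝ) ≤ 1 - x ^ 2)]
  nlinarith [hsq2, hprod, sq_nonneg ((1 - x ^ 2 / 2) * Real.sqrt (1 + x ^ 2) - 1)]

lemma arsinh_aux_ub {x : ℝ} (hx0 : 0 ≤ x) (hx1 : x ≤ 1) :
    (Real.sqrt (1 + x ^ 2))⁻¹ ≤ 1 - x ^ 2 / 2 + 3 / 8 * x ^ 4 := by
  have hs : 0 < Real.sqrt (1 + x ^ 2) := Real.sqrt_pos.2 (by positivity)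
  have hsq : (Real.sqrt (1 + x ^ 2)) ^ 2 = 1 + x ^ 2 := Real.sq_sqrt (by positivity)
  rw [inv_le_iff_one_le_mul₀ hs]
  have hb : (0:ℝ) < 1 - x ^ 2 / 2 + 3 / 8 * x ^ 4 := by nlinarith
  have hbs : 0 < (1 - x ^ 2 / 2 + 3 / 8 * x ^ 4) * Real.sqrt (1 + x ^ 2) := mul_pos hb hs
  have hsq2 : 1 ≤ ((1 - x ^ 2 / 2 + 3 / 8 * x ^ 4) * Real.sqrt (1 + x ^ 2)) ^ 2 := by
    have h := mul_pow (1 - x ^ 2 / 2 + 3 / 8 * x ^ 4) (Real.sqrt (1 + x ^ 2)) 2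
    rw [h, hsq]
    nlinarith [sq_nonneg x, sq_nonneg (x^2), sq_nonneg (x^3)]
  nlinarith [hsq2, hbs, sq_nonneg ((1 - x ^ 2 / 2 + 3 / 8 * x ^ 4) * Real.sqrt (1 + x ^ 2) - 1)]

lemma arsinh_f_deriv (x : ℝ) :
    HasDerivAt (fun y => Real.arsinh y - (y - y ^ 3 / 6))
      ((Real.sqrt (1 + x ^ 2))⁻¹ - (1 - x ^ 2 / 2)) x := by
  have h2 : HasDerivAt (fun y : ℝ => y - y ^ 3 / 6) (1 - x ^ 2 / 2) x := by
    have h3 := (hasDerivAt_pow 3 x).div_const 6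
    have h4 := (hasDerivAt_id x).sub h3
    exact h4.congr_deriv (by ring_nf)
  exact (Real.hasDerivAt_arsinh x).sub h2

lemma arsinh_aux_main {t : ℝ} (h0 : 0 ≤ t) (h1 : t ≤ 1) :
    |Real.arsinh t - (t - t ^ 3 / 6)| ≤ 3 / 40 * t ^ 5 := by
  set f : ℝ → ℝ := fun y => Real.arsinh y - (y - y ^ 3 / 6) with hf
  have hcont : Continuous f := by
    have : Differentiable ℝ f := fun x => (arsinh_f_deriv x).differentiableAt
    exact this.continuous
  have hf0 : f 0 = 0 := by simp [hf, Real.arsinh_zero]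
  have hmono1 : MonotoneOn f (Set.Icc 0 1) := by
    apply monotoneOn_of_deriv_nonneg (convex_Icc 0 1) hcont.continuousOn
    · intro x hx
      exact (arsinh_f_deriv x).differentiableAt.differentiableWithinAt
    · intro x hx
      rw [interior_Icc] at hx
      rw [(arsinh_f_deriv x).deriv]
      have := arsinh_aux_lb hx.1.le hx.2.le
      linarith
  set g : ℝ → ℝ := fun y => 3 / 40 * y ^ 5 - f y with hg
  have hgder : ∀ x : ℝ, HasDerivAt g
      (3 / 8 * x ^ 4 - ((Real.sqrt (1 + x ^ 2))⁻¹ - (1 - x ^ 2 / 2))) x := by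
    intro x
    have h5 : HasDerivAt (fun y : ℝ => 3 / 40 * y ^ 5) (3 / 8 * x ^ 4) x := by
      have := (hasDerivAt_pow 5 x).const_mul (3 / 40 : ℝ)
      exact this.congr_deriv (by ring_nf)
    exact h5.sub (arsinh_f_deriv x)
  have hg0 : g 0 = 0 := by simp [hg, hf0]
  have hmono2 : MonotoneOn g (Set.Icc 0 1) := by
    apply monotoneOn_of_deriv_nonneg (convex_Icc 0 1)
    · exact (Differentiable.continuous fun x => (hgder x).differentiableAt).continuousOn
    · intro x hx
      exact (hgder x).differentiableAt.differentiableWithinAt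
    · intro x hx
      rw [interior_Icc] at hx
      rw [(hgder x).deriv]
      have := arsinh_aux_ub hx.1.le hx.2.le
      linarith
  have ht' : t ∈ Set.Icc (0:ℝ) 1 := ⟨h0, h1⟩
  have h01 : (0:ℝ) ∈ Set.Icc (0:ℝ) 1 := ⟨le_refl 0, zero_le_one⟩
  have hfl : 0 ≤ f t := hf0 ▸ hmono1 h01 ht' h0
  have hfu : f t ≤ 3 / 40 * t ^ 5 := by
    have := hmono2 h01 ht' h0
    rw [hg0] at this
    simp only [hg] at this
    linarith
  rw [abs_of_nonneg hfl]
  exact hfu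

/-- For every real `t` with `|t| ≤ 1`, the cubic Taylor approximation of
the inverse hyperbolic sine satisfies `|arsinh(t) - (t - t³/6)| ≤ (3/40)·|t|⁵`. -/
theorem arsinh_cubic_taylor_bound (t : ℝ) (ht : |t| ≤ 1) :
    |Real.arsinh t - (t - t ^ 3 / 6)| ≤ (3 / 40) * |t| ^ 5 := by
  rcases le_or_gt 0 t with h | h
  · rw [abs_of_nonneg h] at ht ⊢
    exact arsinh_aux_main h ht
  · rw [abs_of_neg h] at ht ⊢
    have := arsinh_aux_main (by linarith : (0:ℝ) ≤ -t) ht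
    rw [Real.arsinh_neg] at this
    have heq : |(-Real.arsinh t) - (-t - (-t) ^ 3 / 6)| = |Real.arsinh t - (t - t ^ 3 / 6)| := by
      rw [← abs_neg]; ring_nf
    rw [heq] at this
    exact this
end
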